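/- For a canonical system G the following are equivalent: (1) G is strongly consistent (the empty sequent is not derivable from { ⇒ p₁, p₂ ⇒ }); (2) G is coherent; (3) G admits strong cut-elimination (every derivation of s from S can be replaced by one where all cut formulas occur in S). -/

import Mathlib

/-- A propositional language: a type of connectives with arities. -/
structure Lang where
  Conn : Type
  arity : Conn → ℕ

/-- Formulas over a language, with atoms indexed by ℕ. -/
inductive Fm (L : Lang) : Type
  | atom : ℕ → Fm L
  | conn : (c : L.Conn) → (Fin (L.arity c) → Fm L) → Fm L

/-- The substitution determined by its values on atoms. -/
def Fm.subst {L : Lang} (σ : ℕ → Fm L) : Fm L → Fm L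
  | .atom n => σ n
  | .conn c f => .conn c (fun i => (f i).subst σ)

/-- A non-strict single-conclusion sequent Γ ⇒ E. -/
structure Sequent (L : Lang) where
  left : Set (Fm L)
  right : Option (Fm L)

/-- A Horn clause over atoms p₁,…,pₙ (represented by `Fin n`). -/
structure Clause (n : ℕ) where
  lhs : Set (Fin n)
  rhs : Option (Fin n)

/-- A canonical right-introduction rule for a connective. -/
structure RightRule (L : Lang) where
  conn : L.Conn
  prem : Set (Clause (L.arity conn))

/-- A canonical left-introduction rule, with hard and soft premises. -/
structure LeftRule (L : Lang) where
  conn : L.Conn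
  hard : Set (Clause (L.arity conn))
  soft : Set (Set (Fin (L.arity conn)))

/-- A canonical system: a collection of canonical rules. -/
structure CanSys (L : Lang) where
  rights : Set (RightRule L)
  lefts : Set (LeftRule L)

/-- The sequent obtained by instantiating a clause with a substitution. -/
def Clause.seq {L : Lang} {n : ℕ} (σ : Fin n → Fm L) (c : Clause n) : Sequent L :=
  ⟨σ '' c.lhs, c.rhs.map σ⟩

/-- Derivability in a canonical system `G` from assumptions `S`,
where all cut formulas must belong to `C`. -/
inductive Deriv {L : Lang} (G : CanSys L) (S : Set (Sequent L)) (C : Set (Fm L)) :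
    Sequent L → Prop
  | hyp {s : Sequent L} : s ∈ S → Deriv G S C s
  | ax (φ : Fm L) : Deriv G S C ⟨{φ}, some φ⟩
  | weakL {Γ Γ' : Set (Fm L)} {E : Option (Fm L)} :
      Deriv G S C ⟨Γ, E⟩ → Γ ⊆ Γ' → Deriv G S C ⟨Γ', E⟩
  | weakR {Γ : Set (Fm L)} (ψ : Fm L) :
      Deriv G S C ⟨Γ, none⟩ → Deriv G S C ⟨Γ, some ψ⟩
  | cut {Γ Δ : Set (Fm L)} {φ : Fm L} {E : Option (Fm L)} :
      φ ∈ C → Deriv G S C ⟨Γ, some φ⟩ → Deriv G S C ⟨insert φ Δ, E⟩ →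
      Deriv G S C ⟨Γ ∪ Δ, E⟩
  | right {Γ : Set (Fm L)} (rr : RightRule L) (hr : rr ∈ G.rights)
      (σ : Fin (L.arity rr.conn) → Fm L) :
      (∀ c ∈ rr.prem, Deriv G S C ⟨Γ ∪ σ '' c.lhs, c.rhs.map σ⟩) →
      Deriv G S C ⟨Γ, some (Fm.conn rr.conn σ)⟩
  | left {Γ : Set (Fm L)} {E : Option (Fm L)} (lr : LeftRule L) (hl : lr ∈ G.lefts)
      (σ : Fin (L.arity lr.conn) → Fm L) :
      (∀ c ∈ lr.hard, Deriv G S C ⟨Γ ∪ σ '' c.lhs, c.rhs.map σ⟩) →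
      (∀ t ∈ lr.soft, Deriv G S C ⟨Γ ∪ σ '' t, E⟩) →
      Deriv G S C ⟨insert (Fm.conn lr.conn σ) Γ, E⟩

/-- The set of formulas occurring in some sequent of `S`. -/
def cutFms {L : Lang} (S : Set (Sequent L)) : Set (Fm L) :=
  {φ | ∃ s ∈ S, φ ∈ s.left ∨ s.right = some φ}

/-- Classical satisfaction of a Horn clause by a two-valued assignment. -/
def Clause.sat {n : ℕ} (v : Fin n → Bool) (c : Clause n) : Prop :=
  (∃ p ∈ c.lhs, v p = false) ∨ (∃ q, c.rhs = some q ∧ v q = true)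

/-- Joint classical satisfiability of the premises of a left rule and a right rule. -/
def JointSat {L : Lang} (lr : LeftRule L) (rr : RightRule L)
    (h : L.arity lr.conn = L.arity rr.conn) : Prop :=
  ∃ v : Fin (L.arity lr.conn) → Bool,
    (∀ c ∈ lr.hard, c.sat v) ∧
    (∀ t ∈ lr.soft, ∃ p ∈ t, v p = false) ∧
    (∀ c ∈ rr.prem, c.sat (fun i => v (Fin.cast h.symm i)))

/-- Coherence: matching left/right rule pairs have jointly unsatisfiable premises. -/
def Coherent {L : Lang} (G : CanSys L) : Prop :=
  ∀ lr ∈ G.lefts, ∀ rr ∈ G.rights, ∀ h : lr.conn = rr.conn,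
    ¬ JointSat lr rr (congrArg L.arity h)

section Semantics

variable {L : Lang} {W : Type}

/-- A sequent is locally true at a world. -/
def locT (v : W → Fm L → Bool) (a : W) (s : Sequent L) : Prop :=
  (∃ ψ ∈ s.left, v a ψ = false) ∨ (∃ φ, s.right = some φ ∧ v a φ = true)

/-- A sequent is (absolutely) true at a world: locally true at all successors. -/
def absT (le : W → W → Prop) (v : W → Fm L → Bool) (a : W) (s : Sequent L) : Prop :=
  ∀ b, le a b → locT v b s

/-- Persistence of a valuation. -/
def PersistentU (le : W → W → Prop) (v : W → Fm L → Bool) : Prop :=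
  ∀ (φ : Fm L) (a b : W), le a b → v a φ = true → v b φ = true

/-- A valuation respects a right-introduction rule. -/
def RespR (le : W → W → Prop) (v : W → Fm L → Bool) (rr : RightRule L) : Prop :=
  ∀ (a : W) (σ : Fin (L.arity rr.conn) → Fm L),
    (∀ c ∈ rr.prem, absT le v a (c.seq σ)) → v a (Fm.conn rr.conn σ) = true

/-- A valuation respects a left-introduction rule. -/
def RespL (le : W → W → Prop) (v : W → Fm L → Bool) (lr : LeftRule L) : Prop :=
  ∀ (a : W) (σ : Fin (L.arity lr.conn) → Fm L),
    (∀ c ∈ lr.hard, absT le v a (c.seq σ)) →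
    (∀ t ∈ lr.soft, locT v a ⟨σ '' t, (none : Option (Fm L))⟩) →
    v a (Fm.conn lr.conn σ) = false

/-- A valuation is G-legal: it respects all rules of G. -/
def LegalU (G : CanSys L) (le : W → W → Prop) (v : W → Fm L → Bool) : Prop :=
  (∀ rr ∈ G.rights, RespR le v rr) ∧ (∀ lr ∈ G.lefts, RespL le v lr)

end Semantics

/-- Semantic consequence: every G-legal frame which is a model of S is a model of s. -/
def SemConseq {L : Lang} (G : CanSys L) (S : Set (Sequent L)) (s : Sequent L) : Prop :=
  ∀ (W : Type) (le : W → W → Prop),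
    (∀ a, le a a) → (∀ a b c, le a b → le b c → le a c) →
    (∀ a b, le a b → le b a → a = b) → Nonempty W →
    ∀ v : W → Fm L → Bool, PersistentU le v → LegalU G le v →
      (∀ t ∈ S, ∀ a, locT v a t) → (∀ a, locT v a s)

/-- Strong consistency: the empty sequent is not derivable from { ⇒ p₁, p₂ ⇒ }. -/
def StronglyConsistent {L : Lang} (G : CanSys L) : Prop :=
  ¬ Deriv G ({⟨∅, some (Fm.atom 0)⟩, ⟨{Fm.atom 1}, none⟩} : Set (Sequent L))
      Set.univ ⟨∅, none⟩

/-- Strong cut-elimination: all cuts can be restricted to formulas occurring in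
the assumptions. -/
def StrongCutElim {L : Lang} (G : CanSys L) : Prop :=
  ∀ (S : Set (Sequent L)) (s : Sequent L),
    Deriv G S Set.univ s → Deriv G S (cutFms S) s

section CutElim

variable {L : Lang}

private lemma finFunCast {α : Sort*} {n m : ℕ} (e : n = m) {f : Fin n → α} {g : Fin m → α}
    (h : HEq f g) (i : Fin n) : f i = g (Fin.cast e i) := by
  subst e; cases h; rfl

private lemma connCast (c c' : L.Conn) (h : c = c') (σ : Fin (L.arity c) → Fm L) :
    Fm.conn c' (fun i => σ (Fin.cast (congrArg L.arity h).symm i)) = Fm.conn c σ := by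
  subst h; rfl

private lemma bool_ne_false {b : Bool} (h : ¬ b = false) : b = true := by
  cases b
  · exact absurd rfl h
  · rfl

/-- Admissibility-of-cut statement for a single cut formula. -/
def ACutStmt (G : CanSys L) (S : Set (Sequent L)) (C : Set (Fm L)) (φ : Fm L) : Prop :=
  ∀ Γ Δ E, Deriv G S C ⟨Γ, some φ⟩ → Deriv G S C ⟨insert φ Δ, E⟩ → Deriv G S C ⟨Γ ∪ Δ, E⟩

lemma Deriv.weakE {G : CanSys L} {S C} {Γ : Set (Fm L)} (d : Deriv G S C ⟨Γ, none⟩)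
    (E : Option (Fm L)) : Deriv G S C ⟨Γ, E⟩ := by
  cases E with
  | none => exact d
  | some ψ => exact d.weakR ψ

/-- Finite multicut. -/
lemma mcut {G : CanSys L} {S C} {n : ℕ} (σ : Fin n → Fm L)
    (hsub : ∀ p : Fin n, ACutStmt G S C (σ p)) (X : Set (Fm L)) (E : Option (Fm L))
    (F : Set (Fin n)) (hder : ∀ p ∈ F, Deriv G S C ⟨X, some (σ p)⟩)
    (d : Deriv G S C ⟨X ∪ σ '' F, E⟩) : Deriv G S C ⟨X, E⟩ := by
  revert hder d
  refine Set.Finite.induction_on F (Set.toFinite F) ?_ ?_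
  · intro _ d; exact d.weakL (by simp)
  · intro a s _ _ ih hder d
    rw [Set.image_insert_eq, Set.union_insert] at d
    have h2 : Deriv G S C ⟨X ∪ (X ∪ σ '' s), E⟩ :=
      hsub a X (X ∪ σ '' s) E (hder a (Set.mem_insert _ _)) d
    exact ih (fun p hp => hder p (Set.mem_insert_of_mem _ hp))
      (h2.weakL (by intro x hx; simp only [Set.mem_union] at hx ⊢; tauto))

/-- The principal case: cutting a compound formula introduced on the right
against a left-rule whose premises (already cut with the context Δ) are given. -/
lemma principal {G : CanSys L} {S : Set (Sequent L)} {C : Set (Fm L)}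
    (hG : Coherent G) (hCS : cutFms S ⊆ C)
    (lr : LeftRule L) (hl : lr ∈ G.lefts) (σ : Fin (L.arity lr.conn) → Fm L)
    (hsub : ∀ i, ACutStmt G S C (σ i)) (hφ : Fm.conn lr.conn σ ∉ C)
    (Δ : Set (Fm L)) (E : Option (Fm L))
    (Hhard : ∀ cl ∈ lr.hard, Deriv G S C ⟨Δ ∪ σ '' cl.lhs, cl.rhs.map σ⟩)
    (Hsoft : ∀ t ∈ lr.soft, Deriv G S C ⟨Δ ∪ σ '' t, E⟩) :
    ∀ t₀ : Sequent L, Deriv G S C t₀ → t₀.right = some (Fm.conn lr.conn σ) →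
      Deriv G S C ⟨t₀.left ∪ Δ, E⟩ := by
  intro t₀ d
  induction d with
  | @hyp s hs =>
    intro hr; exact absurd (hCS ⟨s, hs, Or.inr hr⟩) hφ
  | ax ψ =>
    intro hr
    have hψ : ψ = Fm.conn lr.conn σ := Option.some.inj hr
    subst hψ
    have h0 : Deriv G S C ⟨insert (Fm.conn lr.conn σ) Δ, E⟩ := Deriv.left lr hl σ Hhard Hsoft
    exact h0.weakL (by intro x hx; simp only [Set.mem_insert_iff, Set.mem_union,
      Set.mem_singleton_iff] at hx ⊢; tauto)
  | @weakL Γ₀ Γ₁ E₀ d₀ hss ih =>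
    intro hr
    exact (ih hr).weakL (by intro x hx; simp only [Set.mem_union] at hx ⊢; tauto)
  | @weakR Γ₀ ψ d₀ ih =>
    intro _
    exact (d₀.weakL (Set.subset_union_left : Γ₀ ⊆ Γ₀ ∪ Δ)).weakE E
  | @cut Γ₁ Δ₂ ψ E₀ hc d₁ d₂ ih₁ ih₂ =>
    intro hr
    have h2 := ih₂ hr
    rw [show insert ψ Δ₂ ∪ Δ = insert ψ (Δ₂ ∪ Δ) from Set.insert_union ..] at h2
    have h3 := Deriv.cut hc d₁ h2
    exact h3.weakL (by intro x hx; simp only [Set.mem_union] at hx ⊢; tauto)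
  | @right Γ₀ rr hrr τ hprem ih =>
    intro hr
    have he : Fm.conn rr.conn τ = Fm.conn lr.conn σ := Option.some.inj hr
    injection he with hc hτσ
    have e : L.arity rr.conn = L.arity lr.conn := congrArg L.arity hc
    have hτ : ∀ i, τ i = σ (Fin.cast e i) := fun i => finFunCast e hτσ i
    classical
    set X : Set (Fm L) := Γ₀ ∪ Δ with hX
    set v : Fin (L.arity lr.conn) → Bool :=
      fun p => decide (Deriv G S C ⟨X, some (σ p)⟩) with hv
    have hcoh := hG lr hl rr hrr hc.symm
    by_cases hA : ∀ cl ∈ lr.hard, cl.sat v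
    · by_cases hB : ∀ t ∈ lr.soft, ∃ p ∈ t, v p = false
      · by_cases hC3 : ∀ cl ∈ rr.prem,
            cl.sat (fun i => v (Fin.cast (congrArg L.arity hc.symm).symm i))
        · exact absurd ⟨v, hA, hB, hC3⟩ hcoh
        · push_neg at hC3
          obtain ⟨cl, hcl, hns⟩ := hC3
          rw [Clause.sat] at hns; push_neg at hns
          obtain ⟨h1, h2⟩ := hns
          have hderlhs : ∀ p ∈ cl.lhs, Deriv G S C ⟨X, some (τ p)⟩ := by
            intro p hp
            have hb : Deriv G S C ⟨X, some (σ (Fin.cast (congrArg L.arity hc.symm).symm p))⟩ :=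
              of_decide_eq_true (bool_ne_false (h1 p hp))
            rw [hτ p]
            exact hb
          have hprem' : Deriv G S C ⟨X ∪ τ '' cl.lhs, cl.rhs.map τ⟩ :=
            (hprem cl hcl).weakL
              (by intro x hx; simp only [Set.mem_union, hX] at hx ⊢; tauto)
          have hsub' : ∀ p, ACutStmt G S C (τ p) := fun p => (hτ p) ▸ hsub (Fin.cast e p)
          have hres : Deriv G S C ⟨X, cl.rhs.map τ⟩ := mcut τ hsub' X _ cl.lhs hderlhs hprem'
          cases hq : cl.rhs with
          | none => rw [hq] at hres; exact hres.weakE E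
          | some q =>
            exfalso
            rw [hq] at hres
            apply h2 q hq
            show decide (Deriv G S C ⟨X, some (σ (Fin.cast e q))⟩) = true
            rw [← hτ q]
            exact decide_eq_true hres
      · push_neg at hB
        obtain ⟨t, ht, hall⟩ := hB
        have hderlhs : ∀ p ∈ t, Deriv G S C ⟨X, some (σ p)⟩ := by
          intro p hp
          exact of_decide_eq_true (bool_ne_false (hall p hp))
        have hst : Deriv G S C ⟨X ∪ σ '' t, E⟩ :=
          (Hsoft t ht).weakL (by intro x hx; simp only [Set.mem_union, hX] at hx ⊢; tauto)
        exact mcut σ hsub X E t hderlhs hst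
    · push_neg at hA
      obtain ⟨cl, hcl, hns⟩ := hA
      rw [Clause.sat] at hns; push_neg at hns
      obtain ⟨h1, h2⟩ := hns
      have hderlhs : ∀ p ∈ cl.lhs, Deriv G S C ⟨X, some (σ p)⟩ := by
        intro p hp
        exact of_decide_eq_true (bool_ne_false (h1 p hp))
      have hprem' : Deriv G S C ⟨X ∪ σ '' cl.lhs, cl.rhs.map σ⟩ :=
        (Hhard cl hcl).weakL (by intro x hx; simp only [Set.mem_union, hX] at hx ⊢; tauto)
      have hres : Deriv G S C ⟨X, cl.rhs.map σ⟩ := mcut σ hsub X _ cl.lhs hderlhs hprem'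
      cases hq : cl.rhs with
      | none => rw [hq] at hres; exact hres.weakE E
      | some q =>
        exfalso
        rw [hq] at hres
        exact h2 q hq (decide_eq_true hres)
  | @left Γ₀ E₀ lr' hl' τ hh hsft ihh ihs =>
    intro hr
    have hhard' : ∀ cl ∈ lr'.hard, Deriv G S C ⟨(Γ₀ ∪ Δ) ∪ τ '' cl.lhs, cl.rhs.map τ⟩ := by
      intro cl hcl
      exact (hh cl hcl).weakL (by intro x hx; simp only [Set.mem_union] at hx ⊢; tauto)
    have hsoft' : ∀ t ∈ lr'.soft, Deriv G S C ⟨(Γ₀ ∪ Δ) ∪ τ '' t, E⟩ := by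
      intro t ht
      exact (ihs t ht hr).weakL (by intro x hx; simp only [Set.mem_union] at hx ⊢; tauto)
    have h0 : Deriv G S C ⟨insert (Fm.conn lr'.conn τ) (Γ₀ ∪ Δ), E⟩ :=
      Deriv.left lr' hl' τ hhard' hsoft'
    exact h0.weakL (by intro x hx; simp only [Set.mem_insert_iff, Set.mem_union] at hx ⊢; tauto)

/-- Main cut-reduction lemma: push a cut on `φ ∉ C` upward through the right
derivation. -/
lemma mainCut {G : CanSys L} {S : Set (Sequent L)} {C : Set (Fm L)}
    (hG : Coherent G) (hCS : cutFms S ⊆ C) (φ : Fm L) (hφ : φ ∉ C)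
    (HP : ∀ lr ∈ G.lefts, ∀ τ : Fin (L.arity lr.conn) → Fm L,
      Fm.conn lr.conn τ = φ → ∀ i, ACutStmt G S C (τ i))
    (Γ : Set (Fm L)) (D₁ : Deriv G S C ⟨Γ, some φ⟩) :
    ∀ t : Sequent L, Deriv G S C t → Deriv G S C ⟨Γ ∪ (t.left \ {φ}), t.right⟩ := by
  intro t d
  induction d with
  | @hyp s hs =>
    have hφs : φ ∉ s.left := fun h => hφ (hCS ⟨s, hs, Or.inl h⟩)
    rw [Set.diff_singleton_eq_self hφs]
    exact (Deriv.hyp hs).weakL Set.subset_union_right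
  | ax ψ =>
    by_cases hψ : ψ = φ
    · subst hψ
      exact D₁.weakL Set.subset_union_left
    · refine (Deriv.ax ψ).weakL ?_
      intro x hx
      simp only [Set.mem_singleton_iff] at hx
      subst hx
      exact Or.inr ⟨rfl, hψ⟩
  | @weakL Γ₀ Γ₁ E₀ d₀ hss ih =>
    exact ih.weakL (by intro x hx; simp only [Set.mem_union, Set.mem_diff] at hx ⊢; rcases hx with h | ⟨h1, h2⟩; exacts [Or.inl h, Or.inr ⟨hss h1, h2⟩])
  | @weakR Γ₀ ψ d₀ ih =>
    exact ih.weakR ψ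
  | @cut Γ₁ Δ₂ ψ E₀ hc d₁ d₂ ih₁ ih₂ =>
    have hψφ : ψ ≠ φ := fun h => hφ (h ▸ hc)
    rw [Set.insert_diff_of_notMem _ (by simpa using hψφ), Set.union_insert] at ih₂
    have h3 := Deriv.cut hc ih₁ ih₂
    exact h3.weakL (by intro x hx; simp only [Set.mem_union, Set.mem_diff] at hx ⊢; tauto)
  | @right Γ₀ rr hrr τ hprem ih =>
    refine Deriv.right rr hrr τ ?_
    intro cl hcl
    exact (ih cl hcl).weakL (by intro x hx; simp only [Set.mem_union, Set.mem_diff] at hx ⊢; tauto)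
  | @left Γ₀ E₀ lr hl τ hh hsft ihh ihs =>
    by_cases hψ : Fm.conn lr.conn τ = φ
    · -- principal case
      have hhard' : ∀ cl ∈ lr.hard,
          Deriv G S C ⟨(Γ ∪ (Γ₀ \ {φ})) ∪ τ '' cl.lhs, cl.rhs.map τ⟩ := by
        intro cl hcl
        exact (ihh cl hcl).weakL (by intro x hx; simp only [Set.mem_union, Set.mem_diff] at hx ⊢; tauto)
      have hsoft' : ∀ t ∈ lr.soft,
          Deriv G S C ⟨(Γ ∪ (Γ₀ \ {φ})) ∪ τ '' t, E₀⟩ := by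
        intro t ht
        exact (ihs t ht).weakL (by intro x hx; simp only [Set.mem_union, Set.mem_diff] at hx ⊢; tauto)
      have hres := principal hG hCS lr hl τ (HP lr hl τ hψ) (hψ ▸ hφ)
        (Γ ∪ (Γ₀ \ {φ})) E₀ hhard' hsoft' ⟨Γ, some φ⟩ D₁ (by simp [hψ])
      refine hres.weakL ?_
      intro x hx
      simp only [Set.mem_union, Set.mem_diff, Set.mem_insert_iff,
        Set.mem_singleton_iff] at hx ⊢
      tauto
    · have hhard' : ∀ cl ∈ lr.hard,
          Deriv G S C ⟨(Γ ∪ (Γ₀ \ {φ})) ∪ τ '' cl.lhs, cl.rhs.map τ⟩ := by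
        intro cl hcl
        exact (ihh cl hcl).weakL (by intro x hx; simp only [Set.mem_union, Set.mem_diff] at hx ⊢; tauto)
      have hsoft' : ∀ t ∈ lr.soft,
          Deriv G S C ⟨(Γ ∪ (Γ₀ \ {φ})) ∪ τ '' t, E₀⟩ := by
        intro t ht
        exact (ihs t ht).weakL (by intro x hx; simp only [Set.mem_union, Set.mem_diff] at hx ⊢; tauto)
      have h0 := Deriv.left lr hl τ hhard' hsoft'
      refine h0.weakL ?_
      intro x hx
      simp only [Set.mem_insert_iff, Set.mem_union, Set.mem_diff,
        Set.mem_singleton_iff] at hx ⊢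
      rcases hx with h | h
      · exact Or.inr ⟨Or.inl h, h ▸ hψ⟩
      · tauto

/-- Admissibility of cut for arbitrary formulas, for coherent systems. -/
lemma acut {G : CanSys L} {S : Set (Sequent L)} {C : Set (Fm L)}
    (hG : Coherent G) (hCS : cutFms S ⊆ C) : ∀ φ : Fm L, ACutStmt G S C φ := by
  intro φ
  induction φ with
  | atom n =>
    intro Γ Δ E d₁ d₂
    by_cases h : Fm.atom n ∈ C
    · exact Deriv.cut h d₁ d₂
    · have := mainCut hG hCS (Fm.atom n) h
        (fun lr _ τ hτ => absurd hτ (by intro hh; cases hh)) Γ d₁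
        ⟨insert (Fm.atom n) Δ, E⟩ d₂
      exact this.weakL (by intro x hx; simp only [Set.mem_union, Set.mem_diff, Set.mem_insert_iff, Set.mem_singleton_iff] at hx ⊢; tauto)
  | conn c f ih =>
    intro Γ Δ E d₁ d₂
    by_cases h : Fm.conn c f ∈ C
    · exact Deriv.cut h d₁ d₂
    · have HP : ∀ lr ∈ G.lefts, ∀ τ : Fin (L.arity lr.conn) → Fm L,
          Fm.conn lr.conn τ = Fm.conn c f → ∀ i, ACutStmt G S C (τ i) := by
        intro lr _ τ hτ i
        injection hτ with h1 h2
        rw [finFunCast (congrArg L.arity h1) h2 i]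
        exact ih _
      have := mainCut hG hCS (Fm.conn c f) h HP Γ d₁ ⟨insert (Fm.conn c f) Δ, E⟩ d₂
      exact this.weakL (by intro x hx; simp only [Set.mem_union, Set.mem_diff, Set.mem_insert_iff, Set.mem_singleton_iff] at hx ⊢; tauto)

lemma coherent_sce {G : CanSys L} (hG : Coherent G) : StrongCutElim G := by
  intro S s d
  induction d with
  | hyp h => exact Deriv.hyp h
  | ax φ => exact Deriv.ax φ
  | weakL d h ih => exact ih.weakL h
  | weakR ψ d ih => exact ih.weakR ψ
  | @cut Γ Δ φ E _ d₁ d₂ ih₁ ih₂ =>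
    exact acut hG (subset_refl _) φ Γ Δ E ih₁ ih₂
  | right rr hr σ hp ih => exact Deriv.right rr hr σ ih
  | left lr hl σ hh hs ihh ihs => exact Deriv.left lr hl σ ihh ihs

/-- The two basic assumption sequents. -/
def S₀ (L : Lang) : Set (Sequent L) :=
  {⟨∅, some (Fm.atom 0)⟩, ⟨{Fm.atom 1}, none⟩}

/-- Invariant: with cut formulas among the atoms 0 and 1, every sequent
derivable from S₀ either has a non-trivial left side or a right side ≠ atom 1. -/
lemma inv_lemma {G : CanSys L} {C : Set (Fm L)}
    (hC : ∀ φ ∈ C, φ = Fm.atom 0 ∨ φ = Fm.atom 1) :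
    ∀ t : Sequent L, Deriv G (S₀ L) C t →
      (¬ (t.left ⊆ {Fm.atom 0}) ∨ ∃ ψ, t.right = some ψ ∧ ψ ≠ Fm.atom 1) := by
  intro t d
  induction d with
  | @hyp s hs =>
    rcases hs with h | h
    · subst h; exact Or.inr ⟨Fm.atom 0, rfl, by intro hh; injection hh; omega⟩
    · subst h
      refine Or.inl fun hsub => ?_
      have := hsub (Set.mem_singleton (Fm.atom 1))
      simp only [Set.mem_singleton_iff] at this
      injection this; omega
  | ax ψ =>
    by_cases h : ψ = Fm.atom 1
    · subst h
      refine Or.inl fun hsub => ?_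
      have := hsub (Set.mem_singleton (Fm.atom 1))
      simp only [Set.mem_singleton_iff] at this
      injection this; omega
    · exact Or.inr ⟨ψ, rfl, h⟩
  | @weakL Γ₀ Γ₁ E₀ d₀ hss ih =>
    rcases ih with h | h
    · exact Or.inl fun hsub => h (fun x hx => hsub (hss hx))
    · exact Or.inr h
  | @weakR Γ₀ ψ d₀ ih =>
    rcases ih with h | ⟨ψ', hψ', _⟩
    · exact Or.inl h
    · exact absurd hψ' (by simp)
  | @cut Γ₁ Δ₂ ψ E₀ hc d₁ d₂ ih₁ ih₂ =>
    rcases ih₂ with h | h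
    · by_cases hΔ : Δ₂ ⊆ {Fm.atom 0}
      · have hψ0 : ψ ≠ Fm.atom 0 := by
          intro hh
          exact h (by intro x hx
                      rcases hx with hx | hx
                      · simp [hx, hh]
                      · exact hΔ hx)
        have hψ1 : ψ = Fm.atom 1 := (hC ψ hc).resolve_left hψ0
        rcases ih₁ with h1 | ⟨ψ', hψ', hne⟩
        · exact Or.inl fun hsub => h1 (fun x hx => hsub (Set.mem_union_left _ hx))
        · exact absurd ((Option.some.inj hψ').symm.trans hψ1) hne
      · exact Or.inl fun hsub => hΔ (fun x hx => hsub (Set.mem_union_right _ hx))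
    · exact Or.inr h
  | @right Γ₀ rr hrr τ hprem ih =>
    exact Or.inr ⟨Fm.conn rr.conn τ, rfl, by intro hh; cases hh⟩
  | @left Γ₀ E₀ lr hl τ hh hsft ihh ihs =>
    refine Or.inl fun hsub => ?_
    have := hsub (Set.mem_insert _ _)
    simp only [Set.mem_singleton_iff] at this
    cases this

lemma cutFms_S₀ : ∀ φ ∈ cutFms (S₀ L), φ = Fm.atom 0 ∨ φ = Fm.atom 1 := by
  rintro φ ⟨s, hs, h⟩
  rcases hs with h' | h'
  · subst h'
    rcases h with h | h
    · exact absurd h (Set.notMem_empty φ)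
    · exact Or.inl (Option.some.inj h).symm
  · subst h'
    rcases h with h | h
    · exact Or.inr h
    · exact absurd h (by simp)

lemma sce_sc {G : CanSys L} (hsce : StrongCutElim G) : StronglyConsistent G := by
  intro hder
  have hd : Deriv G (S₀ L) (cutFms (S₀ L)) ⟨∅, none⟩ := hsce (S₀ L) ⟨∅, none⟩ hder
  rcases inv_lemma cutFms_S₀ ⟨∅, none⟩ hd with h | ⟨ψ, hψ, _⟩
  · exact h (by simp)
  · cases hψ

lemma notCoh_notSC {G : CanSys L} (hnc : ¬ Coherent G) : ¬ StronglyConsistent G := by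
  intro hsc
  unfold Coherent at hnc
  push_neg at hnc
  obtain ⟨lr, hl, rr, hr, h, hJ⟩ := hnc
  obtain ⟨v, hA, hB, hC3⟩ := hJ
  set σ : Fin (L.arity lr.conn) → Fm L :=
    fun i => if v i = true then Fm.atom 0 else Fm.atom 1 with hσ
  have hyp1 : Deriv G (S₀ L) Set.univ ⟨∅, some (Fm.atom 0)⟩ :=
    Deriv.hyp (Or.inl rfl)
  have hyp2 : Deriv G (S₀ L) Set.univ ⟨{Fm.atom 1}, none⟩ :=
    Deriv.hyp (Or.inr rfl)
  -- derivation of a clause-instance sequent, over ∅ context, given satisfaction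
  have clauseDer : ∀ {m : ℕ} (ρ : Fin m → Fm L) (w : Fin m → Bool),
      (∀ i, ρ i = if w i = true then Fm.atom 0 else Fm.atom 1) →
      ∀ cl : Clause m, cl.sat w →
        Deriv G (S₀ L) Set.univ ⟨∅ ∪ ρ '' cl.lhs, cl.rhs.map ρ⟩ := by
    intro m ρ w hw cl hsat
    rcases hsat with ⟨p, hp, hvp⟩ | ⟨q, hq, hvq⟩
    · have hmem : Fm.atom 1 ∈ (∅ ∪ ρ '' cl.lhs : Set (Fm L)) := by
        refine Or.inr ⟨p, hp, ?_⟩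
        rw [hw p, hvp]; simp
      have h1 : Deriv G (S₀ L) Set.univ ⟨∅ ∪ ρ '' cl.lhs, none⟩ :=
        hyp2.weakL (by intro x hx; simp only [Set.mem_singleton_iff] at hx; rwa [hx])
      exact h1.weakE _
    · rw [hq]
      have : ρ q = Fm.atom 0 := by rw [hw q, hvq]; simp
      rw [Option.map_some, this]
      exact hyp1.weakL (by simp)
  -- the left-rule application
  have hleft : Deriv G (S₀ L) Set.univ ⟨insert (Fm.conn lr.conn σ) ∅, none⟩ := by
    refine Deriv.left lr hl σ ?_ ?_
    · intro cl hcl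
      exact clauseDer σ v (fun i => rfl) cl (hA cl hcl)
    · intro t ht
      obtain ⟨p, hp, hvp⟩ := hB t ht
      have hmem : Fm.atom 1 ∈ (∅ ∪ σ '' t : Set (Fm L)) := by
        refine Or.inr ⟨p, hp, ?_⟩
        rw [hσ]; simp [hvp]
      exact hyp2.weakL (by intro x hx; simp only [Set.mem_singleton_iff] at hx; rwa [hx])
  -- the right-rule application
  set σ' : Fin (L.arity rr.conn) → Fm L :=
    fun i => σ (Fin.cast (congrArg L.arity h).symm i) with hσ'
  have hright : Deriv G (S₀ L) Set.univ ⟨∅, some (Fm.conn rr.conn σ')⟩ := by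
    refine Deriv.right rr hr σ' ?_
    intro cl hcl
    exact clauseDer σ' (fun i => v (Fin.cast (congrArg L.arity h).symm i))
      (fun i => rfl) cl (hC3 cl hcl)
  rw [hσ', connCast lr.conn rr.conn h σ] at hright
  have hcut := Deriv.cut (Set.mem_univ (Fm.conn lr.conn σ)) hright hleft
  exact hsc (hcut.weakL (by simp))

end CutElim

/-- For canonical systems, strong consistency, coherence and
strong cut-elimination are equivalent. -/
theorem strongCons_coherent_strongCutElim_equiv {L : Lang} (G : CanSys L) :
    (StronglyConsistent G ↔ Coherent G) ∧ (Coherent G ↔ StrongCutElim G) := by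
  have h1 : Coherent G → StrongCutElim G := coherent_sce
  have h2 : StrongCutElim G → StronglyConsistent G := sce_sc
  have h3 : StronglyConsistent G → Coherent G := by
    intro hsc
    by_contra hnc
    exact notCoh_notSC hnc hsc
  exact ⟨⟨h3, fun hc => h2 (h1 hc)⟩, ⟨h1, fun hsce => h3 (h2 hsce)⟩⟩
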